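/- For every natural number p, all real numbers a ≤ b, and every real number c, the interval integral satisfies ∫ z in a..b, |z - c|^p dz ≥ (b - a)^(p+1) / 2^(2p+1), i.e., ∫ z in a..b, |z - c|^p dz ≥ 2 · ((b - a)/4)^(p+1). -/

import Mathlib

lemma aux_half (p : ℕ) (a b c : ℝ) (hab : a ≤ b) (hc : c ≤ (a + b) / 2) :
    (b - a) ^ (p + 1) / 2 ^ (2 * p + 1) ≤ ∫ z in a..b, |z - c| ^ p := by
  set m := (a + b) / 2 with hm
  have ham : a ≤ m := by rw [hm]; linarith
  have hmb : m ≤ b := by rw [hm]; linarith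
  have hcont : Continuous fun z : ℝ => |z - c| ^ p :=
    ((continuous_id.sub continuous_const).abs).pow p
  have int1 : IntervalIntegrable (fun z : ℝ => |z - c| ^ p) MeasureTheory.volume a m :=
    hcont.intervalIntegrable a m
  have int2 : IntervalIntegrable (fun z : ℝ => |z - c| ^ p) MeasureTheory.volume m b :=
    hcont.intervalIntegrable m b
  have int3 : IntervalIntegrable (fun z : ℝ => (z - m) ^ p) MeasureTheory.volume m b :=
    (((continuous_id.sub continuous_const)).pow p).intervalIntegrable m b
  have hsplit : (∫ z in a..b, |z - c| ^ p)
      = (∫ z in a..m, |z - c| ^ p) + ∫ z in m..b, |z - c| ^ p :=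
    (intervalIntegral.integral_add_adjacent_intervals int1 int2).symm
  have h1 : (0:ℝ) ≤ ∫ z in a..m, |z - c| ^ p :=
    intervalIntegral.integral_nonneg ham (fun z _ => by positivity)
  have h2 : (∫ z in m..b, (z - m) ^ p) ≤ ∫ z in m..b, |z - c| ^ p := by
    refine intervalIntegral.integral_mono_on hmb int3 int2 ?_
    intro z hz
    have hz1 : 0 ≤ z - m := by linarith [hz.1]
    have hz2 : z - m ≤ |z - c| := le_trans (by linarith [hz.1]) (le_abs_self _)
    exact pow_le_pow_left₀ hz1 hz2 p
  have h3 : (∫ z in m..b, (z - m) ^ p) = (b - m) ^ (p + 1) / (p + 1) := by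
    rw [intervalIntegral.integral_comp_sub_right (fun x => x ^ p) m, integral_pow]
    simp
  have hbm : b - m = (b - a) / 2 := by rw [hm]; ring
  have hpow : ((p : ℝ) + 1) ≤ 2 ^ p := by
    exact_mod_cast Nat.lt_two_pow_self (n := p)
  have key : (b - a) ^ (p + 1) / 2 ^ (2 * p + 1) ≤ (b - m) ^ (p + 1) / (p + 1) := by
    have heq : (b - a) ^ (p + 1) / 2 ^ (2 * p + 1)
        = ((b - a) / 2) ^ (p + 1) / 2 ^ p := by
      rw [div_pow, div_div, ← pow_add, show p + 1 + p = 2 * p + 1 from by ring]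
    rw [hbm, heq]
    have hnum : (0:ℝ) ≤ ((b - a) / 2) ^ (p + 1) := pow_nonneg (by linarith) _
    gcongr
  linarith [key, h2, h3, hsplit.ge, h1]

theorem interval_moment_lower_bound (p : ℕ) (a b c : ℝ) (hab : a ≤ b) :
    (b - a) ^ (p + 1) / 2 ^ (2 * p + 1) ≤ ∫ z in a..b, |z - c| ^ p := by
  rcases le_total c ((a + b) / 2) with hc | hc
  · exact aux_half p a b c hab hc
  · have hrefl : (∫ z in a..b, |z - (a + b - c)| ^ p) = ∫ z in a..b, |z - c| ^ p := by
      have := intervalIntegral.integral_comp_sub_left (a := a) (b := b)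
        (fun z => |z - c| ^ p) (a + b)
      simp only [add_sub_cancel_right, add_sub_cancel_left] at this
      rw [← this]
      congr 1
      ext z
      rw [show a + b - z - c = -(z - (a + b - c)) by ring, abs_neg]
    rw [← hrefl]
    exact aux_half p a b (a + b - c) hab (by linarith)
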